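/- Let β ∈ (0,1) and set C_β = (1+β)/(1−β). Let x_1, …, x_N and ε be i.i.d. samples from the standard Gaussian distribution N(0, I_d) on ℝ^d, and define z = β·x_1 + (1−β)·ε. Then P(z ∈ Conv({x_1, …, x_N})) ≤ P(‖ε‖² ≤ C_β · max_{1 ≤ i ≤ N} |⟨ε, x_i⟩|). -/

import Mathlib

open MeasureTheory ProbabilityTheory Filter
open scoped RealInnerProductSpace

/-- The standard Gaussian distribution `N(0, I_d)` on `ℝ^d`, i.e. the product of `d`
independent standard normal distributions `N(0,1)`. -/
noncomputable def stdGaussian (d : ℕ) : Measure (EuclideanSpace ℝ (Fin d)) :=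
  (Measure.pi fun _ : Fin d => gaussianReal 0 1).map
    (MeasurableEquiv.toLp 2 (Fin d → ℝ))

/-- If `x_1, …, x_N, ε` are i.i.d. `N(0, I_d)` random vectors, `β ∈ (0,1)`,
`C_β = (1+β)/(1-β)` and `z = β • x_1 + (1-β) • ε`, then
`P(z ∈ Conv({x_1, …, x_N})) ≤ P(‖ε‖² ≤ C_β · max_i |⟨ε, x_i⟩|)`. -/
theorem groot_prob_mem_convexHull_le (d N : ℕ) (hN : 0 < N)
    (β : ℝ) (hβ : β ∈ Set.Ioo (0 : ℝ) 1)
    {Ω : Type*} [MeasurableSpace Ω] (P : Measure Ω) [IsProbabilityMeasure P]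
    (x : Fin N → Ω → EuclideanSpace ℝ (Fin d)) (ε : Ω → EuclideanSpace ℝ (Fin d))
    (hxmeas : ∀ i, Measurable (x i)) (hεmeas : Measurable ε)
    (hindep : iIndepFun
      (Fin.cons ε x : Fin (N + 1) → Ω → EuclideanSpace ℝ (Fin d)) P)
    (hlawx : ∀ i, Measure.map (x i) P = stdGaussian d)
    (hlawε : Measure.map ε P = stdGaussian d) :
    P {ω | β • x ⟨0, hN⟩ ω + (1 - β) • ε ω ∈ convexHull ℝ (Set.range fun i => x i ω)} ≤
      P {ω | ‖ε ω‖ ^ 2 ≤ (1 + β) / (1 - β) *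
        Finset.univ.sup' (Finset.univ_nonempty_iff.mpr (Fin.pos_iff_nonempty.mp hN))
          (fun i => |(⟪ε ω, x i ω⟫)|)} := by
  apply measure_mono
  intro ω hω
  simp only [Set.mem_setOf_eq] at hω ⊢
  obtain ⟨hβ0, hβ1⟩ := hβ
  set M := Finset.univ.sup' (Finset.univ_nonempty_iff.mpr (Fin.pos_iff_nonempty.mp hN))
    (fun i => |(⟪ε ω, x i ω⟫)|) with hM
  have hMle : ∀ i, ⟪ε ω, x i ω⟫ ≤ M := fun i =>
    le_trans (le_abs_self _)
      (Finset.le_sup' (fun j => |(⟪ε ω, x j ω⟫)|) (Finset.mem_univ i))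
  have hMge : ∀ i, -M ≤ ⟪ε ω, x i ω⟫ := fun i =>
    neg_le_of_neg_le (le_trans (neg_le_abs _)
      (Finset.le_sup' (fun j => |(⟪ε ω, x j ω⟫)|) (Finset.mem_univ i)))
  have hconv : convexHull ℝ (Set.range fun i => x i ω) ⊆ {y | ⟪ε ω, y⟫ ≤ M} := by
    apply convexHull_min
    · rintro y ⟨i, rfl⟩; exact hMle i
    · exact convex_halfSpace_le ⟨fun a b => inner_add_right _ _ _,
        fun c a => real_inner_smul_right _ _ _⟩ M
  have hz : ⟪ε ω, β • x ⟨0, hN⟩ ω + (1 - β) • ε ω⟫ ≤ M := hconv hω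
  rw [inner_add_right, real_inner_smul_right, real_inner_smul_right,
    real_inner_self_eq_norm_sq] at hz
  have h1 : (1 - β) * ‖ε ω‖ ^ 2 ≤ (1 + β) * M := by nlinarith [hMge ⟨0, hN⟩]
  rw [div_mul_eq_mul_div, le_div_iff₀ (by linarith)]
  linarith
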